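/- arXiv:1905.08151 — 2 statements merged into one kernel-verified Lean document; each statement's English description precedes it below -/
import Mathlib

section
/- Let d ≥ 2 be an integer, h = π/n for some n ∈ ℕ, and u ∈ H^h_d. Then for every k ∈ ℤ^{d−1} and every n ∈ ℕ₀, the discrete Fourier transform of the n-th layer satisfies (ℱ(u(·, n·h)))(k) = (Q(λ(h·k)))^{−n} · (ℱ(u(·, 0)))(k); i.e. on the Fourier side the discrete harmonic extension to the half space acts layerwise as multiplication by Q(λ(h·k))^{−1}. -/
open scoped Real

/-!
Fourier transform of a bounded periodic discrete harmonic function on the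
half-space mesh `(hℤ^{d-1}) × (hℕ₀)` with `h = π/n`.  A lattice point `h·x`
of `hℤ^{d-1}` is represented by its integer coordinate `x : Fin (d-1) → ℤ`,
and a height `h·m` by `m : ℕ`.
-/

/-- The cube `I_n^m = {-n+1,…,n}^m` of integer points, so that
`ω_h^m = h·I_{π/h}^m` with `h = π/n`. -/
noncomputable def ILpi (m n : ℕ) : Finset (Fin m → ℤ) :=
  Finset.Icc (fun _ => -(n:ℤ) + 1) (fun _ => (n:ℤ))

/-- The discrete Fourier transform on the mesh `hℤ^m`, `h = π/n`:
`(ℱv)(k) = h^m Σ_{x ∈ ω_h^m} v(hx) e^{−i k·(hx)}`. -/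
noncomputable def dft (m n : ℕ) (v : (Fin m → ℤ) → ℂ) (k : Fin m → ℤ) : ℂ :=
  ((π / (n:ℝ)) ^ m : ℝ) *
    ∑ x ∈ ILpi m n, v x *
      Complex.exp (-Complex.I * ((∑ i, (k i : ℝ) * (π / (n:ℝ) * (x i : ℝ))) : ℝ))

/-- `Q(z) = z + √(z+1)·√(z−1)` (real form: the statement only evaluates `Q` at
real arguments `λ(t) ≥ 1`, where the principal complex square roots agree with
the real ones). -/
noncomputable def Qr (z : ℝ) : ℝ := z + Real.sqrt (z+1) * Real.sqrt (z-1)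

/-- `λ(t) = d − Σ_{i=1}^{d-1} cos t_i`. -/
noncomputable def lam (d : ℕ) (t : Fin (d-1) → ℝ) : ℝ := (d:ℝ) - ∑ i, Real.cos (t i)

/-- `u` belongs to `H^h_{d,≥0}` with `h = π/n`: bounded, `2π`-periodic in the
first `d-1` variables (i.e. `2n`-periodic in integer coordinates), and
discrete harmonic at every point of `(hℤ^{d-1}) × (hℕ)`. -/
def HalfHarmMesh (d n : ℕ) (u : (Fin (d-1) → ℤ) → ℕ → ℂ) : Prop :=
  (∃ B : ℝ, ∀ x y, ‖u x y‖ ≤ B) ∧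
  (∀ x y i, u (x + (2*n) • Pi.single i 1) y = u x y) ∧
  (∀ x y, (∑ i, (u (x + Pi.single i 1) (y+1) + u (x - Pi.single i 1) (y+1)))
      + u x (y+2) + u x y = 2 * d * u x (y+1))

lemma shift_sum (m n : ℕ) (hn : 1 ≤ n) (g : (Fin m → ℤ) → ℂ) (i : Fin m)
    (hper : ∀ x, g (x + (2*n) • Pi.single i 1) = g x) :
    ∑ x ∈ ILpi m n, g (x + Pi.single i 1) = ∑ x ∈ ILpi m n, g x := by
  have hmem : ∀ x : Fin m → ℤ, x ∈ ILpi m n ↔ ∀ j, -(n:ℤ)+1 ≤ x j ∧ x j ≤ n := by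
    intro x
    simp [ILpi, Finset.mem_Icc, Pi.le_def, forall_and]
  refine Finset.sum_bij'
    (fun x _ => Function.update x i (if x i = (n:ℤ) then -(n:ℤ)+1 else x i + 1))
    (fun y _ => Function.update y i (if y i = -(n:ℤ)+1 then (n:ℤ) else y i - 1))
    ?_ ?_ ?_ ?_ ?_
  · intro x hx
    rw [hmem] at hx ⊢
    intro j
    rcases eq_or_ne j i with rfl | hj
    · simp only [Function.update_self]
      split_ifs with h
      · constructor <;> omega
      · have := hx j; constructor <;> omega
    · simpa [Function.update_of_ne hj] using hx j
  · intro y hy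
    rw [hmem] at hy ⊢
    intro j
    rcases eq_or_ne j i with rfl | hj
    · simp only [Function.update_self]
      split_ifs with h
      · constructor <;> omega
      · have := hy j; constructor <;> omega
    · simpa [Function.update_of_ne hj] using hy j
  · intro x hx
    rw [hmem] at hx
    funext j
    rcases eq_or_ne j i with rfl | hj
    · have h1 := (hx j).1; have h2 := (hx j).2
      simp only [Function.update_self]
      split_ifs <;> omega
    · simp [Function.update_of_ne hj]
  · intro y hy
    rw [hmem] at hy
    funext j
    rcases eq_or_ne j i with rfl | hj
    · have h1 := (hy j).1; have h2 := (hy j).2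
      simp only [Function.update_self]
      split_ifs <;> omega
    · simp [Function.update_of_ne hj]
  · intro x hx
    rw [hmem] at hx
    beta_reduce
    by_cases h : x i = (n:ℤ)
    · have key : Function.update x i (-(n:ℤ)+1) + (2*n) • Pi.single i 1 = x + Pi.single i 1 := by
        funext j
        rcases eq_or_ne j i with rfl | hj
        · simp [Function.update_self, h]; ring
        · simp [Function.update_of_ne hj, Pi.single_eq_of_ne hj]
      rw [if_pos h, ← hper (Function.update x i (-(n:ℤ)+1)), key]
    · have key : x + Pi.single i 1 = Function.update x i (x i + 1) := by
        funext j
        rcases eq_or_ne j i with rfl | hj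
        · simp
        · simp [Function.update_of_ne hj, Pi.single_eq_of_ne hj]
      rw [if_neg h, key]


lemma shift_sum_neg (m n : ℕ) (hn : 1 ≤ n) (g : (Fin m → ℤ) → ℂ) (i : Fin m)
    (hper : ∀ x, g (x + (2*n) • Pi.single i 1) = g x) :
    ∑ x ∈ ILpi m n, g (x - Pi.single i 1) = ∑ x ∈ ILpi m n, g x := by
  have := shift_sum m n hn (fun x => g (x - Pi.single i 1)) i ?_
  · calc ∑ x ∈ ILpi m n, g (x - Pi.single i 1)
        = ∑ x ∈ ILpi m n, g (x + Pi.single i 1 - Pi.single i 1) := this.symm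
      _ = ∑ x ∈ ILpi m n, g x := by simp
  · intro x
    have : x + (2*n) • Pi.single i 1 - Pi.single i 1
        = (x - Pi.single i 1) + (2*n) • Pi.single i 1 := by abel
    simp only [this, hper]

noncomputable def ph (m n : ℕ) (k x : Fin m → ℤ) : ℝ :=
  ∑ i, (k i : ℝ) * (π / (n:ℝ) * (x i : ℝ))

lemma ph_add_single (m n : ℕ) (k x : Fin m → ℤ) (i : Fin m) (c : ℤ) :
    ph m n k (x + c • Pi.single i 1) = ph m n k x + (k i : ℝ) * (π/(n:ℝ)) * (c:ℝ) := by
  unfold ph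
  set y : Fin m → ℤ := x + c • Pi.single i 1 with hy
  have h1 : ∀ j, (k j : ℝ) * (π/(n:ℝ) * ((y j : ℤ) : ℝ))
      = (k j:ℝ) * (π/(n:ℝ) * ((x j : ℤ):ℝ)) + (if j = i then (k i:ℝ) * (π/(n:ℝ)) * (c:ℝ) else 0) := by
    intro j
    rcases eq_or_ne j i with rfl | hj
    · have h2 : y j = x j + c := by simp [hy]
      rw [h2, if_pos rfl]; push_cast; ring
    · have h2 : y j = x j := by simp [hy, Pi.single_eq_of_ne hj]
      rw [h2, if_neg hj, add_zero]
  simp only [h1, Finset.sum_add_distrib, Finset.sum_ite_eq' Finset.univ i, Finset.mem_univ,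
    if_true]

lemma exp_period (n : ℕ) (hn : 1 ≤ n) (a : ℝ) (c : ℤ) :
    Complex.exp (-Complex.I * ((a + (c:ℝ) * (π/(n:ℝ)) * ((2*n:ℕ):ℤ)) : ℝ)) =
    Complex.exp (-Complex.I * (a:ℝ)) := by
  have hne : ((n:ℝ)) ≠ 0 := Nat.cast_ne_zero.mpr (by omega)
  have h0 : a + (c:ℝ) * (π/(n:ℝ)) * (((2*n:ℕ):ℤ):ℝ) = a + 2*π*(c:ℝ) := by
    push_cast
    field_simp
  rw [show (a + (c:ℝ) * (π/(n:ℝ)) * ((2*n:ℕ):ℤ) : ℝ) = a + 2*π*(c:ℝ) from h0,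
    show -Complex.I * ((a + 2*π*(c:ℝ) : ℝ) : ℂ) =
      -Complex.I * (a:ℝ) + ((-c:ℤ):ℂ) * (2*(π:ℝ)*Complex.I) by push_cast; ring,
    Complex.exp_add, Complex.exp_int_mul_two_pi_mul_I, mul_one]

lemma dft_sum_shift (m n : ℕ) (hn : 1 ≤ n) (v : (Fin m → ℤ) → ℂ) (k : Fin m → ℤ) (i : Fin m)
    (hper : ∀ x, v (x + (2*n) • Pi.single i 1) = v x) :
    ∑ x ∈ ILpi m n, v (x + Pi.single i 1) * Complex.exp (-Complex.I * (ph m n k x : ℝ))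
      = Complex.exp (Complex.I * (((k i : ℝ) * (π/(n:ℝ)) : ℝ) : ℂ)) *
        ∑ x ∈ ILpi m n, v x * Complex.exp (-Complex.I * (ph m n k x : ℝ)) := by
  set g : (Fin m → ℤ) → ℂ := fun x => v x * Complex.exp (-Complex.I * (ph m n k x : ℝ)) with hg
  have hgper : ∀ x, g (x + (2*n) • Pi.single i 1) = g x := by
    intro x
    simp only [hg, hper]
    congr 1
    have := ph_add_single m n k x i ((2*n : ℕ):ℤ)
    have h2 : x + ((2*n:ℕ):ℤ) • Pi.single i 1 = x + (2*n) • Pi.single i 1 := by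
      norm_cast
    rw [← h2, this]
    exact exp_period n hn (ph m n k x) (k i)
  have key : ∀ x, v (x + Pi.single i 1) * Complex.exp (-Complex.I * (ph m n k x : ℝ))
      = Complex.exp (Complex.I * (((k i : ℝ) * (π/(n:ℝ)) : ℝ) : ℂ)) * g (x + Pi.single i 1) := by
    intro x
    have hp : ph m n k (x + Pi.single i 1) = ph m n k x + (k i : ℝ) * (π/(n:ℝ)) := by
      have := ph_add_single m n k x i 1
      simpa using this
    simp only [hg, hp]
    rw [mul_comm (Complex.exp _) (v _ * Complex.exp _), mul_assoc, ← Complex.exp_add]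
    congr 2
    push_cast
    ring
  rw [Finset.sum_congr rfl (fun x _ => key x), ← Finset.mul_sum,
    shift_sum m n hn g i hgper]

lemma dft_sum_shift_neg (m n : ℕ) (hn : 1 ≤ n) (v : (Fin m → ℤ) → ℂ) (k : Fin m → ℤ) (i : Fin m)
    (hper : ∀ x, v (x + (2*n) • Pi.single i 1) = v x) :
    ∑ x ∈ ILpi m n, v (x - Pi.single i 1) * Complex.exp (-Complex.I * (ph m n k x : ℝ))
      = Complex.exp (-Complex.I * (((k i : ℝ) * (π/(n:ℝ)) : ℝ) : ℂ)) *
        ∑ x ∈ ILpi m n, v x * Complex.exp (-Complex.I * (ph m n k x : ℝ)) := by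
  set g : (Fin m → ℤ) → ℂ := fun x => v x * Complex.exp (-Complex.I * (ph m n k x : ℝ)) with hg
  have hgper : ∀ x, g (x + (2*n) • Pi.single i 1) = g x := by
    intro x
    simp only [hg, hper]
    congr 1
    have := ph_add_single m n k x i ((2*n : ℕ):ℤ)
    have h2 : x + ((2*n:ℕ):ℤ) • Pi.single i 1 = x + (2*n) • Pi.single i 1 := by
      norm_cast
    rw [← h2, this]
    exact exp_period n hn (ph m n k x) (k i)
  have key : ∀ x, v (x - Pi.single i 1) * Complex.exp (-Complex.I * (ph m n k x : ℝ))
      = Complex.exp (-Complex.I * (((k i : ℝ) * (π/(n:ℝ)) : ℝ) : ℂ)) * g (x - Pi.single i 1) := by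
    intro x
    have hp : ph m n k (x - Pi.single i 1) = ph m n k x - (k i : ℝ) * (π/(n:ℝ)) := by
      have h := ph_add_single m n k x i (-1)
      have hx2 : x + (-1 : ℤ) • Pi.single i 1 = x - Pi.single i 1 := by
        simp [sub_eq_add_neg]
      rw [hx2] at h
      rw [h]; push_cast; ring
    simp only [hg, hp]
    rw [mul_comm (Complex.exp _) (v _ * Complex.exp _), mul_assoc, ← Complex.exp_add]
    congr 2
    push_cast
    ring
  rw [Finset.sum_congr rfl (fun x _ => key x), ← Finset.mul_sum,
    shift_sum_neg m n hn g i hgper]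

lemma Qr_ge_one {l : ℝ} (hl : 1 ≤ l) : 1 ≤ Qr l := by
  have : 0 ≤ Real.sqrt (l+1) * Real.sqrt (l-1) :=
    mul_nonneg (Real.sqrt_nonneg _) (Real.sqrt_nonneg _)
  unfold Qr; linarith

lemma Qr_inv {l : ℝ} (hl : 1 ≤ l) :
    (Qr l)⁻¹ = l - Real.sqrt (l+1) * Real.sqrt (l-1) := by
  have hs : (Real.sqrt (l+1) * Real.sqrt (l-1))^2 = (l+1)*(l-1) := by
    rw [mul_pow, Real.sq_sqrt (by linarith), Real.sq_sqrt (by linarith)]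
  have hmul : Qr l * (l - Real.sqrt (l+1) * Real.sqrt (l-1)) = 1 := by
    unfold Qr; nlinarith [hs]
  exact inv_eq_of_mul_eq_one_right hmul

lemma Qr_add_inv {l : ℝ} (hl : 1 ≤ l) : Qr l + (Qr l)⁻¹ = 2 * l := by
  rw [Qr_inv hl]; unfold Qr; ring

lemma rec_solve (Q : ℝ) (hQ : 1 ≤ Q) (F : ℕ → ℂ) (C : ℝ)
    (hb : ∀ m, ‖F m‖ ≤ C)
    (hrec : ∀ m, F (m+2) + F m = ((Q + Q⁻¹ : ℝ) : ℂ) * F (m+1)) :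
    ∀ m, F m = ((Q:ℂ))^(-(m:ℤ)) * F 0 := by
  have hQ0 : (0:ℝ) < Q := lt_of_lt_of_le one_pos hQ
  have hQne : (Q:ℂ) ≠ 0 := by
    simpa using ne_of_gt hQ0
  have hQc : (Q:ℂ) * ((Q:ℂ))⁻¹ = 1 := mul_inv_cancel₀ hQne
  set G : ℕ → ℂ := fun m => F (m+1) - ((Q:ℂ))⁻¹ * F m with hG
  have hrec' : ∀ m, F (m+2) + F m = ((Q:ℂ) + ((Q:ℂ))⁻¹) * F (m+1) := by
    intro m
    have h := hrec m
    push_cast at h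
    exact h
  have hGrec : ∀ m, G (m+1) = (Q:ℂ) * G m := by
    intro m
    simp only [hG]
    linear_combination hrec' m + F m * hQc
  have hGpow : ∀ m, G m = (Q:ℂ)^m * G 0 := by
    intro m
    induction m with
    | zero => simp
    | succ p ih => rw [hGrec p, ih, pow_succ]; ring
  have hC0 : 0 ≤ C := le_trans (norm_nonneg _) (hb 0)
  have hqle : ‖((Q:ℂ)⁻¹)‖ ≤ 1 := by
    rw [norm_inv, Complex.norm_real, Real.norm_eq_abs, abs_of_pos hQ0]
    exact inv_le_one_of_one_le₀ hQ
  have hGb : ∀ m, ‖G m‖ ≤ C + C := by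
    intro m
    simp only [hG]
    calc ‖F (m+1) - (Q:ℂ)⁻¹ * F m‖
        ≤ ‖F (m+1)‖ + ‖(Q:ℂ)⁻¹ * F m‖ := by
          exact (norm_sub_le _ _)
      _ ≤ C + C := by
          rw [norm_mul]
          have h1 := hb (m+1)
          have h2 := hb m
          have h3 := norm_nonneg (F m)
          nlinarith [hqle]
  have hG0 : G 0 = 0 := by
    by_contra hne
    have habs : 0 < ‖G 0‖ := by
      simpa [norm_pos_iff] using hne
    rcases eq_or_lt_of_le hQ with hQ1 | hQ1
    · -- Q = 1
      have hq1 : ((Q:ℂ))⁻¹ = 1 := by rw [← hQ1]; norm_num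
      have hFm : ∀ m, F m = F 0 + (m:ℂ) * G 0 := by
        intro m
        induction m with
        | zero => simp
        | succ p ih =>
          have h := hGpow p
          rw [← hQ1] at h
          simp only [Complex.ofReal_one, one_pow, one_mul] at h
          have : F (p+1) = G p + ((Q:ℂ))⁻¹ * F p := by simp [hG]
          rw [this, h, hq1, ih]
          push_cast
          ring
      obtain ⟨m, hm⟩ := exists_nat_gt ((C + C) / ‖G 0‖)
      have h1 := hb m
      rw [hFm m] at h1
      have h2 : ‖(m:ℂ) * G 0‖ ≤ ‖F 0 + (m:ℂ)*G 0‖ + ‖F 0‖ := by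
        have := norm_sub_le (F 0 + (m:ℂ)*G 0) (F 0)
        simpa using this
      rw [norm_mul, Complex.norm_natCast] at h2
      have h3 := hb 0
      have h4 : (C + C) / ‖G 0‖ < (m:ℝ) := hm
      rw [div_lt_iff₀ habs] at h4
      nlinarith
    · -- 1 < Q
      obtain ⟨m, hm⟩ := pow_unbounded_of_one_lt ((C + C) / ‖G 0‖) hQ1
      have h1 := hGb m
      rw [hGpow m, norm_mul, norm_pow, Complex.norm_real, Real.norm_eq_abs, abs_of_pos hQ0] at h1
      rw [div_lt_iff₀ habs] at hm
      nlinarith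
  have hstep : ∀ m, F (m+1) = ((Q:ℂ))⁻¹ * F m := by
    intro m
    have h := hGpow m
    rw [hG0, mul_zero] at h
    exact sub_eq_zero.mp h
  intro m
  induction m with
  | zero => simp
  | succ p ih =>
    rw [hstep p, ih, show (-(((p+1:ℕ)):ℤ)) = -(p:ℤ) - 1 by push_cast; ring,
      zpow_sub₀ hQne, zpow_one]
    ring

lemma two_cos_exp (t : ℝ) :
    Complex.exp (Complex.I * (t:ℝ)) + Complex.exp (-Complex.I * (t:ℝ))
      = ((2 * Real.cos t : ℝ) : ℂ) := by
  rw [show Complex.I * (t:ℂ) = (t:ℂ) * Complex.I by ring,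
    show -Complex.I * (t:ℂ) = (-t:ℂ) * Complex.I by ring,
    Complex.exp_mul_I, Complex.exp_mul_I, Complex.cos_neg, Complex.sin_neg,
    Complex.ofReal_mul, Complex.ofReal_ofNat, Complex.ofReal_cos]
  ring

/-- **Fourier transform of the harmonic extension.**  For every `k ∈ ℤ^{d-1}`
and every `m ∈ ℕ₀`,
`(ℱ(u(·, m·h)))(k) = (Q(λ(h·k)))^{-m} · (ℱ(u(·,0)))(k)`. -/
theorem fourier_of_halfspace_harmonic
    (d n : ℕ) (hd : 2 ≤ d) (hn : 1 ≤ n)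
    (u : (Fin (d-1) → ℤ) → ℕ → ℂ) (hu : HalfHarmMesh d n u) :
    ∀ (k : Fin (d-1) → ℤ) (m : ℕ),
      dft (d-1) n (fun x => u x m) k
        = ((Qr (lam d (fun i => π / (n:ℝ) * (k i : ℝ))) : ℂ)) ^ (-(m:ℤ)) *
            dft (d-1) n (fun x => u x 0) k := by
  intro k m
  obtain ⟨⟨B, hB⟩, hper, hharm⟩ := hu
  set l : ℝ := lam d (fun i => π / (n:ℝ) * (k i : ℝ)) with hl
  set e : (Fin (d-1) → ℤ) → ℂ :=
    fun x => Complex.exp (-Complex.I * (ph (d-1) n k x : ℝ)) with he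
  set S : ℕ → ℂ := fun m => ∑ x ∈ ILpi (d-1) n, u x m * e x with hS
  set c0 : ℝ := (π / (n:ℝ)) ^ (d-1) with hc0
  set F : ℕ → ℂ := fun m => (c0 : ℂ) * S m with hF
  have hdft : ∀ m, dft (d-1) n (fun x => u x m) k = F m := by
    intro m; rfl
  -- λ ≥ 1
  have hlam : 1 ≤ l := by
    have hcos : ∑ i, Real.cos (π / (n:ℝ) * (k i : ℝ)) ≤ ((d-1 : ℕ) : ℝ) := by
      calc ∑ i, Real.cos (π / (n:ℝ) * (k i : ℝ))
          ≤ ∑ _i : Fin (d-1), (1:ℝ) :=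
            Finset.sum_le_sum (fun i _ => Real.cos_le_one _)
        _ = ((d-1 : ℕ) : ℝ) := by simp
    have hcast : ((d-1 : ℕ) : ℝ) = (d:ℝ) - 1 := by
      rw [Nat.cast_sub (by omega : 1 ≤ d)]; norm_num
    rw [hl]; unfold lam; rw [hcast] at hcos; linarith
  have hQ1 : 1 ≤ Qr l := Qr_ge_one hlam
  -- boundedness
  have hc0nn : 0 ≤ c0 := pow_nonneg (div_nonneg Real.pi_pos.le (Nat.cast_nonneg n)) _
  have habse : ∀ x, ‖e x‖ = 1 := by
    intro x
    rw [he]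
    simp only
    rw [show -Complex.I * ((ph (d-1) n k x : ℝ) : ℂ)
        = ((-(ph (d-1) n k x) : ℝ) : ℂ) * Complex.I by push_cast; ring,
      Complex.norm_exp_ofReal_mul_I]
  set C : ℝ := c0 * (((ILpi (d-1) n).card : ℝ) * B) with hC
  have hFb : ∀ m, ‖F m‖ ≤ C := by
    intro m
    rw [hF]
    simp only
    rw [norm_mul, Complex.norm_real, Real.norm_eq_abs, abs_of_nonneg hc0nn]
    have hSb : ‖S m‖ ≤ ((ILpi (d-1) n).card : ℝ) * B := by
      calc ‖S m‖ ≤ ∑ x ∈ ILpi (d-1) n, ‖u x m * e x‖ :=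
            norm_sum_le _ _
        _ ≤ ∑ _x ∈ ILpi (d-1) n, B := by
            refine Finset.sum_le_sum (fun x _ => ?_)
            rw [norm_mul, habse x, mul_one]
            exact hB x m
        _ = ((ILpi (d-1) n).card : ℝ) * B := by
            rw [Finset.sum_const, nsmul_eq_mul]
    rw [hC]
    exact mul_le_mul_of_nonneg_left hSb hc0nn
  -- the recurrence
  have hSrec : ∀ m, S (m+2) + S m = ((2*l : ℝ) : ℂ) * S (m+1) := by
    intro m
    have hterm : ∀ i : Fin (d-1), ∑ x ∈ ILpi (d-1) n,
        (u (x + Pi.single i 1) (m+1) + u (x - Pi.single i 1) (m+1)) * e x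
        = ((2 * Real.cos (π / (n:ℝ) * (k i : ℝ)) : ℝ) : ℂ) * S (m+1) := by
      intro i
      have hv : ∀ x, u (x + (2*n) • Pi.single i 1) (m+1) = u x (m+1) :=
        fun x => hper x (m+1) i
      have h1 := dft_sum_shift (d-1) n hn (fun x => u x (m+1)) k i hv
      have h2 := dft_sum_shift_neg (d-1) n hn (fun x => u x (m+1)) k i hv
      calc ∑ x ∈ ILpi (d-1) n,
            (u (x + Pi.single i 1) (m+1) + u (x - Pi.single i 1) (m+1)) * e x
          = (∑ x ∈ ILpi (d-1) n, u (x + Pi.single i 1) (m+1) * e x)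
            + ∑ x ∈ ILpi (d-1) n, u (x - Pi.single i 1) (m+1) * e x := by
            rw [← Finset.sum_add_distrib]
            exact Finset.sum_congr rfl fun x _ => by ring
        _ = (Complex.exp (Complex.I * (((k i : ℝ) * (π/(n:ℝ)) : ℝ) : ℂ))
            + Complex.exp (-Complex.I * (((k i : ℝ) * (π/(n:ℝ)) : ℝ) : ℂ))) * S (m+1) := by
            simp only [hS, he]
            rw [h1, h2]
            ring
        _ = ((2 * Real.cos (π / (n:ℝ) * (k i : ℝ)) : ℝ) : ℂ) * S (m+1) := by
            rw [show (π / (n:ℝ) * (k i : ℝ)) = ((k i : ℝ) * (π / (n:ℝ))) by ring,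
              ← two_cos_exp]
    have hsum : ∑ x ∈ ILpi (d-1) n,
        (((∑ i, (u (x + Pi.single i 1) (m+1) + u (x - Pi.single i 1) (m+1)))
          + u x (m+2) + u x m) * e x)
        = ∑ x ∈ ILpi (d-1) n, ((2 * d * u x (m+1)) * e x) :=
      Finset.sum_congr rfl (fun x _ => by rw [hharm x m])
    have hL : ∑ x ∈ ILpi (d-1) n,
        (((∑ i, (u (x + Pi.single i 1) (m+1) + u (x - Pi.single i 1) (m+1)))
          + u x (m+2) + u x m) * e x)
        = ((2 * ((d:ℝ) - l) : ℝ) : ℂ) * S (m+1) + (S (m+2) + S m) := by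
      calc ∑ x ∈ ILpi (d-1) n,
            (((∑ i, (u (x + Pi.single i 1) (m+1) + u (x - Pi.single i 1) (m+1)))
              + u x (m+2) + u x m) * e x)
          = (∑ x ∈ ILpi (d-1) n,
              (∑ i, (u (x + Pi.single i 1) (m+1) + u (x - Pi.single i 1) (m+1))) * e x)
            + (S (m+2) + S m) := by
            simp only [hS]
            rw [← Finset.sum_add_distrib, ← Finset.sum_add_distrib]
            exact Finset.sum_congr rfl fun x _ => by ring
        _ = (∑ x ∈ ILpi (d-1) n,
              ∑ i, (u (x + Pi.single i 1) (m+1) + u (x - Pi.single i 1) (m+1)) * e x)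
            + (S (m+2) + S m) := by
            exact congrArg (fun z => z + (S (m+2) + S m))
              (Finset.sum_congr rfl fun x _ => Finset.sum_mul _ _ _)
        _ = (∑ i, ∑ x ∈ ILpi (d-1) n,
              (u (x + Pi.single i 1) (m+1) + u (x - Pi.single i 1) (m+1)) * e x)
            + (S (m+2) + S m) :=
            congrArg (fun z => z + (S (m+2) + S m)) Finset.sum_comm
        _ = (∑ i, ((2 * Real.cos (π / (n:ℝ) * (k i : ℝ)) : ℝ) : ℂ) * S (m+1))
            + (S (m+2) + S m) :=
            congrArg (fun z => z + (S (m+2) + S m))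
              (Finset.sum_congr rfl fun i _ => hterm i)
        _ = ((2 * ((d:ℝ) - l) : ℝ) : ℂ) * S (m+1) + (S (m+2) + S m) := by
            refine congrArg (fun z => z + (S (m+2) + S m)) ?_
            rw [← Finset.sum_mul]
            congr 1
            rw [← Complex.ofReal_sum]
            congr 1
            rw [hl]
            unfold lam
            rw [← Finset.mul_sum]
            ring
    have hR : ∑ x ∈ ILpi (d-1) n, ((2 * d * u x (m+1)) * e x)
        = 2 * (d:ℂ) * S (m+1) := by
      simp only [hS]
      rw [Finset.mul_sum]
      exact Finset.sum_congr rfl (fun x _ => by ring)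
    rw [hL, hR] at hsum
    have hc : ((2 * ((d:ℝ) - l) : ℝ) : ℂ) = 2 * (d:ℂ) - ((2*l:ℝ):ℂ) := by
      push_cast; ring
    rw [hc] at hsum
    linear_combination hsum
  have hFrec : ∀ m, F (m+2) + F m = ((Qr l + (Qr l)⁻¹ : ℝ) : ℂ) * F (m+1) := by
    intro m
    have h2l : ((Qr l + (Qr l)⁻¹ : ℝ) : ℂ) = ((2*l : ℝ) : ℂ) := by
      rw [Qr_add_inv hlam]
    rw [h2l, hF]
    simp only
    rw [← mul_add, hSrec m]
    ring
  rw [hdft m, hdft 0]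
  exact rec_solve (Qr l) hQ1 F C hFb hFrec m
end

section
/- Let d ≥ 2 be an integer, h = π/n for some n ∈ ℕ, u ∈ H^h_d, r ∈ [0,∞), and N ∈ ℕ with N·h ≥ r, and assume Σ_{x ∈ ω_h^{d−1}} u(x,0) = 0. Then: (i) for every k ∈ I_{π/h}^{d−1} ∖ {0}, (Q(λ(k·h)))^{−N} ≤ (1 + √c · r)^{−1}; and (ii) ‖u(·, N·h)‖_{L²_h(ω_h^{d−1})} ≤ (1 + √c · r)^{−1} · ‖u(·, 0)‖_{L²_h(ω_h^{d−1})}, where c = inf_{s∈[−π,π]∖{0}} (1 − cos s)/s². -/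
open scoped Real

/-- `c = inf_{s ∈ [−π,π] \ {0}} (1 − cos s)/s²`. -/
noncomputable def cLow : ℝ :=
  sInf ((fun s => (1 - Real.cos s) / s ^ 2) '' (Set.Icc (-π) π \ {0}))

noncomputable def ch (n : ℕ) (j : ℤ) : ℂ :=
  Complex.exp ((π / (n:ℝ) * (j:ℝ) : ℝ) * Complex.I)

lemma ch_add (n : ℕ) (a b : ℤ) : ch n (a + b) = ch n a * ch n b := by
  unfold ch; rw [← Complex.exp_add]; push_cast; ring_nf

lemma ch_zero (n : ℕ) : ch n 0 = 1 := by simp [ch]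

lemma ch_ne_zero (n : ℕ) (j : ℤ) : ch n j ≠ 0 := Complex.exp_ne_zero _

lemma ch_abs (n : ℕ) (j : ℤ) : ‖ch n j‖ = 1 :=
  Complex.norm_exp_ofReal_mul_I _

lemma ch_mul (n : ℕ) (j x : ℤ) : ch n (j * x) = ch n j ^ x := by
  unfold ch
  rw [← Complex.exp_int_mul]
  congr 1
  push_cast; ring

lemma ch_pow_two_n (n : ℕ) (hn : 1 ≤ n) (j : ℤ) : ch n j ^ (2 * (n:ℤ)) = 1 := by
  rw [← ch_mul]
  unfold ch
  have hn0 : (n:ℝ) ≠ 0 := Nat.cast_ne_zero.2 (by omega)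
  have : (π / (n:ℝ) * ((j * (2*(n:ℤ)) : ℤ) : ℝ) : ℝ) = (j:ℝ) * (2 * π) := by
    push_cast; field_simp
  rw [this]
  have h2 : ((((j:ℝ) * (2*π)) : ℝ) : ℂ) * Complex.I = (j:ℤ) * (2 * π * Complex.I) := by
    push_cast; ring
  rw [h2]
  exact Complex.exp_int_mul_two_pi_mul_I j

lemma ch_ne_one (n : ℕ) (hn : 1 ≤ n) (j : ℤ) (hj : j ≠ 0)
    (h1 : -(2*(n:ℤ)) < j) (h2 : j < 2*n) : ch n j ≠ 1 := by
  intro h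
  rw [ch, Complex.exp_eq_one_iff] at h
  obtain ⟨m, hm⟩ := h
  have hn0 : (n:ℝ) ≠ 0 := Nat.cast_ne_zero.2 (by omega)
  have hm' : ((π / (n:ℝ) * (j:ℝ) : ℝ) : ℂ) = (((m:ℝ) * (2*π) : ℝ) : ℂ) := by
    have h3 : ((π / (n:ℝ) * (j:ℝ) : ℝ) : ℂ) * Complex.I
        = (((m:ℝ) * (2*π) : ℝ) : ℂ) * Complex.I := by
      push_cast at hm ⊢; linear_combination hm
    exact mul_right_cancel₀ Complex.I_ne_zero h3
  have hr : (π / (n:ℝ) * (j:ℝ)) = (m:ℝ) * (2*π) := Complex.ofReal_inj.mp hm'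
  have hπ : (0:ℝ) < π := Real.pi_pos
  have hrr : π * (j:ℝ) = π * (2 * m * n) := by field_simp at hr; rw [hr]; ring
  have : (j:ℝ) = 2 * m * n := mul_left_cancel₀ (ne_of_gt hπ) hrr
  have hj' : j = 2 * m * n := by exact_mod_cast this
  have hm0 : m ≠ 0 := by rintro rfl; simp at hj'; omega
  have h1' : 1 ≤ |m| := Int.one_le_abs hm0
  have habs : |j| = 2 * |m| * n := by
    rw [hj', abs_mul, abs_mul]
    simp [abs_of_nonneg (by positivity : (0:ℤ) ≤ (n:ℤ))]
  have hlt : |j| < 2*n := abs_lt.2 ⟨h1, h2⟩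
  nlinarith [habs, hlt, h1']

lemma ch_sum_zero (n : ℕ) (hn : 1 ≤ n) (j : ℤ) (hj : j ≠ 0)
    (h1 : -(2*(n:ℤ)) < j) (h2 : j < 2*n) :
    ∑ x ∈ Finset.Icc (-(n:ℤ)+1) (n:ℤ), ch n (j * x) = 0 := by
  set ω := ch n j with hω
  have hω0 : ω ≠ 0 := ch_ne_zero n j
  have hω1 : ω ≠ 1 := ch_ne_one n hn j hj h1 h2
  have hstep : ∑ x ∈ Finset.Icc (-(n:ℤ)+1) (n:ℤ), ch n (j * x)
      = ∑ t ∈ Finset.range (2*n), ω ^ ((-(n:ℤ)+1) + t) := by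
    refine Finset.sum_nbij' (i := fun x => (x + (n:ℤ) - 1).toNat)
      (j := fun t => (-(n:ℤ)+1) + (t:ℤ)) ?_ ?_ ?_ ?_ ?_
    · intro a ha
      rw [Finset.mem_Icc] at ha
      rw [Finset.mem_range]
      omega
    · intro a ha
      rw [Finset.mem_range] at ha
      rw [Finset.mem_Icc]
      constructor <;> omega
    · intro a ha; rw [Finset.mem_Icc] at ha; omega
    · intro a ha; rw [Finset.mem_range] at ha; omega
    · intro a ha
      rw [Finset.mem_Icc] at ha
      rw [ch_mul]
      congr 1
      omega
  rw [hstep]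
  have : ∀ t ∈ Finset.range (2*n), ω ^ ((-(n:ℤ)+1) + t) = ω ^ (-(n:ℤ)+1) * ω ^ (t:ℕ) := by
    intro t _
    rw [zpow_add₀ hω0]
    norm_cast
  rw [Finset.sum_congr rfl this, ← Finset.mul_sum, geom_sum_eq hω1]
  have : ω ^ (2*n) = 1 := by
    have := ch_pow_two_n n hn j
    rw [← hω] at this
    have h' : ω ^ ((2*(n:ℤ)).toNat) = 1 := by
      rw [← zpow_natCast]
      simpa using this
    have e : (2*(n:ℤ)).toNat = 2*n := by omega
    rwa [e] at h'
  rw [this]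
  simp


lemma ch_conj (n : ℕ) (j : ℤ) : (starRingEnd ℂ) (ch n j) = ch n (-j) := by
  unfold ch
  rw [← Complex.exp_conj]
  congr 1
  rw [map_mul, Complex.conj_I, Complex.conj_ofReal]
  push_cast
  ring

lemma ch_cos (n : ℕ) (j : ℤ) :
    ch n j + ch n (-j) = 2 * ((Real.cos (π/(n:ℝ) * (j:ℝ)) : ℝ) : ℂ) := by
  unfold ch
  have h : (π/(n:ℝ) * ((-j : ℤ) : ℝ) : ℝ) = -(π/(n:ℝ) * (j:ℝ)) := by push_cast; ring
  rw [h, Complex.ofReal_neg, Complex.exp_mul_I, Complex.exp_mul_I,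
    Complex.cos_neg, Complex.sin_neg, Complex.ofReal_cos]
  ring

lemma ILpi_eq (m n : ℕ) :
    ILpi m n = Fintype.piFinset (fun _ : Fin m => Finset.Icc (-(n:ℤ)+1) (n:ℤ)) :=
  Pi.Icc_eq _ _

lemma mem_ILpi_iff {m n : ℕ} {x : Fin m → ℤ} :
    x ∈ ILpi m n ↔ ∀ i, -(n:ℤ)+1 ≤ x i ∧ x i ≤ n := by
  rw [ILpi_eq, Fintype.mem_piFinset]
  simp [Finset.mem_Icc]

lemma orth (m n : ℕ) (hn : 1 ≤ n) (c : Fin m → ℤ)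
    (hc : ∀ i, -(2*(n:ℤ)) < c i ∧ c i < 2*n) :
    ∑ x ∈ ILpi m n, ∏ i, ch n (c i * x i)
      = if c = 0 then ((2*n : ℕ) : ℂ)^m else 0 := by
  rw [ILpi_eq, Finset.sum_prod_piFinset _ (fun i v => ch n (c i * v))]
  by_cases h : c = 0
  · subst h
    rw [if_pos rfl]
    have : ∀ i ∈ Finset.univ (α := Fin m), (∑ j ∈ Finset.Icc (-(n:ℤ)+1) (n:ℤ), ch n ((0 : Fin m → ℤ) i * j)) = ((2*n : ℕ) : ℂ) := by
      intro i _
      simp only [Pi.zero_apply, zero_mul, ch_zero, Finset.sum_const, nsmul_eq_mul, mul_one]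
      rw [Int.card_Icc]
      congr 1
      push_cast
      omega
    rw [Finset.prod_congr rfl this, Finset.prod_const, Finset.card_univ, Fintype.card_fin]
  · obtain ⟨i, hi⟩ : ∃ i, c i ≠ 0 := by
      by_contra hall
      push_neg at hall
      exact h (funext hall)
    rw [if_neg h]
    apply Finset.prod_eq_zero (Finset.mem_univ i)
    exact ch_sum_zero n hn (c i) hi (hc i).1 (hc i).2

lemma sum_shift {m n : ℕ} (hn : 1 ≤ n) (f : (Fin m → ℤ) → ℂ) (i : Fin m)
    (hper : ∀ x, f (x + (2*n) • Pi.single i 1) = f x) :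
    ∑ x ∈ ILpi m n, f (x + Pi.single i 1) = ∑ x ∈ ILpi m n, f x := by
  classical
  refine Finset.sum_nbij'
    (i := fun x => Function.update x i (if x i = (n:ℤ) then -(n:ℤ)+1 else x i + 1))
    (j := fun x => Function.update x i (if x i = -(n:ℤ)+1 then (n:ℤ) else x i - 1))
    ?_ ?_ ?_ ?_ ?_
  · intro a ha
    rw [mem_ILpi_iff] at ha ⊢
    intro j
    rcases eq_or_ne j i with rfl | hj
    · rw [Function.update_self]
      have := ha j
      split <;> omega
    · rw [Function.update_of_ne hj]
      exact ha j
  · intro a ha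
    rw [mem_ILpi_iff] at ha ⊢
    intro j
    rcases eq_or_ne j i with rfl | hj
    · rw [Function.update_self]
      have := ha j
      split <;> omega
    · rw [Function.update_of_ne hj]
      exact ha j
  · intro a ha
    rw [mem_ILpi_iff] at ha
    funext j
    rcases eq_or_ne j i with rfl | hj
    · rw [Function.update_self]
      rw [Function.update_self]
      have := ha j
      split
      · next h =>
        rw [if_pos rfl]; omega
      · next h =>
        rw [if_neg (by omega)]; omega
    · rw [Function.update_of_ne hj, Function.update_of_ne hj]
  · intro a ha
    rw [mem_ILpi_iff] at ha
    funext j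
    rcases eq_or_ne j i with rfl | hj
    · rw [Function.update_self, Function.update_self]
      have := ha j
      by_cases h2 : a j = -(n:ℤ)+1
      · rw [if_pos h2]
        rw [if_pos rfl]
        omega
      · rw [if_neg h2]
        rw [if_neg (by omega)]
        omega
    · rw [Function.update_of_ne hj, Function.update_of_ne hj]
  · intro a ha
    rw [mem_ILpi_iff] at ha
    by_cases h2 : a i = (n:ℤ)
    · rw [if_pos h2]
      have key : a + Pi.single i 1
          = (Function.update a i (-(n:ℤ)+1)) + (2*n) • Pi.single i 1 := by
        funext j
        rcases eq_or_ne j i with rfl | hj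
        · simp [Function.update_self, h2]
          push_cast
          ring
        · simp [Function.update_of_ne hj, Pi.single_eq_of_ne hj]
      rw [key, hper]
    · rw [if_neg h2]
      congr 1
      funext j
      rcases eq_or_ne j i with rfl | hj
      · simp [Function.update_self]
      · simp [Function.update_of_ne hj, Pi.single_eq_of_ne hj]

lemma ch_mul_two_n (n : ℕ) (hn : 1 ≤ n) (t : ℤ) : ch n (t * (2*(n:ℤ))) = 1 := by
  rw [ch_mul, ch_pow_two_n n hn]

lemma sum_shift_neg {m n : ℕ} (hn : 1 ≤ n) (f : (Fin m → ℤ) → ℂ) (i : Fin m)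
    (hper : ∀ x, f (x + (2*n) • Pi.single i 1) = f x) :
    ∑ x ∈ ILpi m n, f (x - Pi.single i 1) = ∑ x ∈ ILpi m n, f x := by
  have h := sum_shift hn (fun x => f (x - Pi.single i 1)) i (by
    intro x
    rw [add_sub_right_comm]
    exact hper _)
  have h2 : ∀ x : Fin m → ℤ, x + Pi.single i 1 - Pi.single i 1 = x := by
    intro x; abel
  calc ∑ x ∈ ILpi m n, f (x - Pi.single i 1) = ∑ x ∈ ILpi m n, f x := by
        rw [← h]
        exact Finset.sum_congr rfl (fun x _ => by rw [h2])

noncomputable def Ech (m n : ℕ) (k x : Fin m → ℤ) : ℂ := ∏ i, ch n (-(k i * x i))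

lemma Ech_abs (m n : ℕ) (k x : Fin m → ℤ) : ‖Ech m n k x‖ = 1 := by
  unfold Ech
  rw [norm_prod]
  simp [ch_abs]

lemma Ech_shift (m n : ℕ) (hn : 1 ≤ n) (k x : Fin m → ℤ) (i : Fin m) :
    Ech m n k (x + Pi.single i 1) = Ech m n k x * ch n (-(k i)) := by
  unfold Ech
  have : ∀ j : Fin m, ch n (-(k j * ((x + Pi.single i 1 : Fin m → ℤ) j)))
      = ch n (-(k j * x j)) * (if j = i then ch n (-(k i)) else 1) := by
    intro j
    rcases eq_or_ne j i with rfl | hj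
    · rw [if_pos rfl, ← ch_add]
      congr 1
      rw [Pi.add_apply, Pi.single_eq_same]
      ring
    · rw [if_neg hj, mul_one]
      congr 2
      rw [Pi.add_apply, Pi.single_eq_of_ne hj, add_zero]
  rw [Finset.prod_congr rfl (fun j _ => this j), Finset.prod_mul_distrib]
  congr 1
  simp

lemma Ech_per (m n : ℕ) (hn : 1 ≤ n) (k x : Fin m → ℤ) (i : Fin m) :
    Ech m n k (x + (2*n) • Pi.single i 1) = Ech m n k x := by
  unfold Ech
  apply Finset.prod_congr rfl
  intro j _
  rcases eq_or_ne j i with rfl | hj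
  · have h1 : ((x + (2*n) • Pi.single j 1 : Fin m → ℤ)) j = x j + 2*(n:ℤ) := by
      rw [Pi.add_apply, Pi.smul_apply, Pi.single_eq_same]
      push_cast
      ring
    rw [h1]
    have h2 : -(k j * (x j + 2*(n:ℤ))) = -(k j * x j) + (-(k j)) * (2*(n:ℤ)) := by ring
    rw [h2, ch_add, ch_mul_two_n n hn, mul_one]
  · congr 2
    rw [Pi.add_apply, Pi.smul_apply, Pi.single_eq_of_ne hj, smul_zero, add_zero]


lemma Ech_orth (m n : ℕ) (hn : 1 ≤ n) (x x' : Fin m → ℤ)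
    (hx : x ∈ ILpi m n) (hx' : x' ∈ ILpi m n) :
    ∑ k ∈ ILpi m n, Ech m n k x * (starRingEnd ℂ) (Ech m n k x')
      = if x' = x then ((2*n : ℕ) : ℂ)^m else 0 := by
  have key : ∀ k : Fin m → ℤ, Ech m n k x * (starRingEnd ℂ) (Ech m n k x')
      = ∏ i, ch n ((x' i - x i) * k i) := by
    intro k
    unfold Ech
    rw [map_prod, ← Finset.prod_mul_distrib]
    apply Finset.prod_congr rfl
    intro i _
    rw [ch_conj, ← ch_add]
    congr 1
    ring
  rw [Finset.sum_congr rfl (fun k _ => key k)]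
  rw [orth m n hn _ (by
    intro i
    have h1 := (mem_ILpi_iff.mp hx) i
    have h2 := (mem_ILpi_iff.mp hx') i
    omega)]
  have hiff : ((fun i => x' i - x i) = 0) ↔ (x' = x) := by
    constructor
    · intro h
      funext i
      have := congrFun h i
      simp only [Pi.zero_apply] at this
      omega
    · intro h
      subst h
      funext i
      simp
  exact if_congr hiff rfl rfl

lemma parseval (m n : ℕ) (hn : 1 ≤ n) (v : (Fin m → ℤ) → ℂ) :
    ∑ k ∈ ILpi m n, ((∑ x ∈ ILpi m n, v x * Ech m n k x) *
        (starRingEnd ℂ) (∑ x ∈ ILpi m n, v x * Ech m n k x))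
      = ((2*n : ℕ) : ℂ)^m * ∑ x ∈ ILpi m n, v x * (starRingEnd ℂ) (v x) := by
  have expand : ∀ k, (∑ x ∈ ILpi m n, v x * Ech m n k x) *
        (starRingEnd ℂ) (∑ x ∈ ILpi m n, v x * Ech m n k x)
      = ∑ x ∈ ILpi m n, ∑ x' ∈ ILpi m n,
          (v x * (starRingEnd ℂ) (v x')) *
            (Ech m n k x * (starRingEnd ℂ) (Ech m n k x')) := by
    intro k
    rw [map_sum, Finset.sum_mul_sum]
    apply Finset.sum_congr rfl
    intro x _
    apply Finset.sum_congr rfl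
    intro x' _
    rw [map_mul]
    ring
  rw [Finset.sum_congr rfl (fun k _ => expand k)]
  rw [Finset.sum_comm]
  have inner : ∀ x ∈ ILpi m n,
      (∑ k ∈ ILpi m n, ∑ x' ∈ ILpi m n,
          (v x * (starRingEnd ℂ) (v x')) *
            (Ech m n k x * (starRingEnd ℂ) (Ech m n k x')))
      = ((2*n : ℕ) : ℂ)^m * (v x * (starRingEnd ℂ) (v x)) := by
    intro x hx
    rw [Finset.sum_comm]
    have step : ∀ x' ∈ ILpi m n,
        (∑ k ∈ ILpi m n, (v x * (starRingEnd ℂ) (v x')) *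
            (Ech m n k x * (starRingEnd ℂ) (Ech m n k x')))
        = (v x * (starRingEnd ℂ) (v x')) * (if x' = x then ((2*n : ℕ) : ℂ)^m else 0) := by
      intro x' hx'
      rw [← Finset.mul_sum, Ech_orth m n hn x x' hx hx']
    rw [Finset.sum_congr rfl step]
    simp only [mul_ite, mul_zero]
    rw [Finset.sum_ite_eq' (ILpi m n) x (fun x' => v x * (starRingEnd ℂ) (v x') * ((2*n : ℕ) : ℂ)^m), if_pos hx]
    ring
  rw [Finset.sum_congr rfl inner, ← Finset.mul_sum]

lemma Qr_gt_one {z : ℝ} (hz : 1 < z) : 1 < Qr z := by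
  have : 0 ≤ Real.sqrt (z+1) * Real.sqrt (z-1) := by positivity
  unfold Qr; linarith

lemma Qr_quad {z : ℝ} (hz : 1 ≤ z) : Qr z * Qr z - 2 * z * Qr z + 1 = 0 := by
  unfold Qr
  have h1 : Real.sqrt (z+1) * Real.sqrt (z+1) = z + 1 := Real.mul_self_sqrt (by linarith)
  have h2 : Real.sqrt (z-1) * Real.sqrt (z-1) = z - 1 := Real.mul_self_sqrt (by linarith)
  nlinarith [h1, h2]

lemma Qr_inv_add {z : ℝ} (hz : 1 < z) : (Qr z)⁻¹ + Qr z = 2 * z := by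
  have hq : 1 < Qr z := Qr_gt_one hz
  have h0 : Qr z ≠ 0 := by linarith
  field_simp
  nlinarith [Qr_quad hz.le]

/-- bounded solution of `a(y+2) = 2λ a(y+1) - a(y)` with `λ > 1` decays like `q^{-y}`. -/
lemma solve_rec {l : ℝ} (hl : 1 < l) (a : ℕ → ℂ) (C : ℝ)
    (hb : ∀ y, ‖a y‖ ≤ C)
    (hrec : ∀ y, a (y+2) = 2 * (l:ℂ) * a (y+1) - a y) :
    ∀ y, a y = a 0 * ((Qr l : ℝ) : ℂ)⁻¹ ^ y := by
  set q : ℝ := Qr l with hqdef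
  have hq : 1 < q := Qr_gt_one hl
  have hq0 : (q:ℂ) ≠ 0 := by
    simp only [ne_eq, Complex.ofReal_eq_zero]; linarith
  have hsum : ((q:ℂ))⁻¹ + q = 2 * l := by
    have h := Qr_inv_add hl
    exact_mod_cast congrArg (Complex.ofReal) h
  set b : ℕ → ℂ := fun y => a (y+1) - ((q:ℂ))⁻¹ * a y with hbdef
  have hbstep : ∀ y, b (y+1) = (q:ℂ) * b y := by
    intro y
    simp only [hbdef]
    rw [hrec y]
    have : 2 * (l:ℂ) = ((q:ℂ))⁻¹ + q := hsum.symm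
    rw [this]
    field_simp
    ring
  have hbpow : ∀ y, b y = (q:ℂ) ^ y * b 0 := by
    intro y
    induction y with
    | zero => simp
    | succ y ih => rw [hbstep y, ih]; ring
  have hb0 : b 0 = 0 := by
    by_contra hne
    have hC' : ∀ y, ‖b y‖ ≤ C * (1 + (q⁻¹ : ℝ)) := by
      intro y
      simp only [hbdef]
      calc ‖a (y+1) - (q:ℂ)⁻¹ * a y‖
          ≤ ‖a (y+1)‖ + ‖(q:ℂ)⁻¹ * a y‖ := by
            exact norm_sub_le _ _
        _ ≤ C + q⁻¹ * C := by
            rw [norm_mul]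
            have h1 : ‖((q:ℂ)⁻¹)‖ = q⁻¹ := by
              rw [norm_inv, Complex.norm_of_nonneg (by linarith)]
            rw [h1]
            have := hb y
            have := hb (y+1)
            have hqi : (0:ℝ) ≤ q⁻¹ := by positivity
            nlinarith
        _ = C * (1 + q⁻¹) := by ring
    obtain ⟨y, hy⟩ := pow_unbounded_of_one_lt (C * (1 + (q⁻¹:ℝ)) / ‖b 0‖) hq
    have habs : ‖b y‖ = q ^ y * ‖b 0‖ := by
      rw [hbpow y, norm_mul, norm_pow, Complex.norm_of_nonneg (by linarith)]
    have hpos : 0 < ‖b 0‖ := by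
      exact norm_pos_iff.mpr hne
    have := hC' y
    rw [habs] at this
    have : q ^ y ≤ C * (1 + q⁻¹) / ‖b 0‖ := by
      rw [le_div_iff₀ hpos]; linarith
    linarith
  have hstep : ∀ y, a (y+1) = ((q:ℂ))⁻¹ * a y := by
    intro y
    have : b y = 0 := by rw [hbpow y, hb0]; ring
    simp only [hbdef] at this
    linear_combination this
  intro y
  induction y with
  | zero => simp
  | succ y ih => rw [hstep y, ih]; ring

lemma solve_lin (a : ℕ → ℂ) (C : ℝ) (hb : ∀ y, ‖a y‖ ≤ C)
    (hrec : ∀ y, a (y+2) = 2 * a (y+1) - a y) (h0 : a 0 = 0) : ∀ y, a y = 0 := by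
  have hdiff : ∀ y, a (y+1) - a y = a 1 - a 0 := by
    intro y
    induction y with
    | zero => rfl
    | succ y ih => rw [hrec y]; linear_combination ih
  have hlin : ∀ y, a y = a 0 + y * (a 1 - a 0) := by
    intro y
    induction y with
    | zero => simp
    | succ y ih =>
      have := hdiff y
      push_cast
      linear_combination ih + this
  have h10 : a 1 = a 0 := by
    by_contra hne
    have hpos : 0 < ‖a 1 - a 0‖ := by
      exact norm_pos_iff.mpr (sub_ne_zero.mpr hne)
    obtain ⟨y, hy⟩ := exists_nat_gt ((C + ‖a 0‖) / ‖a 1 - a 0‖)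
    have := hb y
    rw [hlin y] at this
    have h1 : (y:ℝ) * ‖a 1 - a 0‖ - ‖a 0‖ ≤ C := by
      calc (y:ℝ) * ‖a 1 - a 0‖ - ‖a 0‖
          = ‖(y:ℂ) * (a 1 - a 0)‖ - ‖a 0‖ := by
            rw [norm_mul]; simp
        _ ≤ ‖a 0 + y * (a 1 - a 0)‖ := by
            have h2 := norm_add_le (a 0 + (y:ℂ) * (a 1 - a 0)) (-(a 0))
            have h3 : a 0 + (y:ℂ) * (a 1 - a 0) + -a 0 = (y:ℂ) * (a 1 - a 0) := by ring
            rw [h3, norm_neg] at h2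
            linarith
        _ ≤ C := this
    rw [div_lt_iff₀ hpos] at hy
    linarith
  intro y
  rw [hlin y, h10, h0]
  simp

lemma cLow_nonneg : 0 ≤ cLow := by
  apply le_csInf
  · exact ⟨_, ⟨π, ⟨⟨by linarith [Real.pi_pos], le_refl π⟩, by
      simp [Real.pi_ne_zero]⟩, rfl⟩⟩
  · rintro b ⟨s, hs, rfl⟩
    have h1 : Real.cos s ≤ 1 := Real.cos_le_one s
    exact div_nonneg (by linarith) (sq_nonneg s)

lemma cLow_bddBelow : BddBelow ((fun s => (1 - Real.cos s) / s ^ 2) '' (Set.Icc (-π) π \ {0})) := by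
  refine ⟨0, ?_⟩
  rintro b ⟨s, hs, rfl⟩
  have h1 : Real.cos s ≤ 1 := Real.cos_le_one s
  exact div_nonneg (by linarith) (sq_nonneg s)

lemma cLow_bound {s : ℝ} (h1 : -π ≤ s) (h2 : s ≤ π) (h0 : s ≠ 0) :
    cLow * s ^ 2 ≤ 1 - Real.cos s := by
  have hmem : s ∈ Set.Icc (-π) π \ {0} := ⟨⟨h1, h2⟩, h0⟩
  have := csInf_le cLow_bddBelow (Set.mem_image_of_mem _ hmem)
  have hs2 : (0:ℝ) < s ^ 2 := by positivity
  calc cLow * s ^ 2 ≤ ((1 - Real.cos s) / s ^ 2) * s ^ 2 := by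
        exact mul_le_mul_of_nonneg_right this hs2.le
    _ = 1 - Real.cos s := by field_simp

lemma lam_eq (d : ℕ) (hd : 2 ≤ d) (t : Fin (d-1) → ℝ) :
    lam d t = 1 + ∑ i, (1 - Real.cos (t i)) := by
  unfold lam
  rw [Finset.sum_sub_distrib, Finset.sum_const, Finset.card_univ, Fintype.card_fin]
  have : ((d-1 : ℕ) : ℝ) = (d:ℝ) - 1 := by
    have : 1 ≤ d := by omega
    push_cast [Nat.cast_sub this]
    ring
  rw [nsmul_eq_mul, this]
  ring

lemma lam_lower (d n : ℕ) (hd : 2 ≤ d) (hn : 1 ≤ n)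
    (k : Fin (d-1) → ℤ) (hk : k ∈ ILpi (d-1) n) (hk0 : k ≠ 0) :
    1 + cLow * (π/(n:ℝ))^2 ≤ lam d (fun i => π/(n:ℝ) * (k i : ℝ)) ∧
    1 < lam d (fun i => π/(n:ℝ) * (k i : ℝ)) := by
  have hnpos : (0:ℝ) < n := by exact_mod_cast (by omega : 0 < n)
  have hh : (0:ℝ) < π/(n:ℝ) := div_pos Real.pi_pos hnpos
  obtain ⟨j, hj⟩ : ∃ j, k j ≠ 0 := by
    by_contra hall
    push_neg at hall
    exact hk0 (funext hall)
  set t : Fin (d-1) → ℝ := fun i => π/(n:ℝ) * (k i : ℝ) with ht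
  have htj_ne : t j ≠ 0 := by
    simp only [ht]
    exact mul_ne_zero (ne_of_gt hh) (by exact_mod_cast hj)
  have hbd : ∀ i, |t i| ≤ π := by
    intro i
    have := (mem_ILpi_iff.mp hk) i
    rw [ht, abs_mul, abs_of_pos hh]
    have hki : |(k i : ℝ)| ≤ (n:ℝ) := by
      rw [← Int.cast_abs]
      exact_mod_cast abs_le.mpr ⟨by omega, this.2⟩
    calc π/(n:ℝ) * |(k i : ℝ)| ≤ π/(n:ℝ) * n := by
          exact mul_le_mul_of_nonneg_left hki hh.le
      _ = π := by field_simp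
  have hnonneg : ∀ i, 0 ≤ 1 - Real.cos (t i) := fun i => by
    linarith [Real.cos_le_one (t i)]
  have hterm : cLow * (π/(n:ℝ))^2 ≤ 1 - Real.cos (t j) ∧ 0 < 1 - Real.cos (t j) := by
    constructor
    · have h1 : cLow * (t j)^2 ≤ 1 - Real.cos (t j) :=
        cLow_bound (by linarith [abs_le.mp (hbd j), hbd j]) (by linarith [abs_le.mp (hbd j)]) htj_ne
      have h2 : (π/(n:ℝ))^2 ≤ (t j)^2 := by
        have : π/(n:ℝ) ≤ |t j| := by
          rw [ht, abs_mul, abs_of_pos hh]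
          have : (1:ℝ) ≤ |(k j : ℝ)| := by
            rw [← Int.cast_abs]
            exact_mod_cast Int.one_le_abs hj
          nlinarith
        calc (π/(n:ℝ))^2 ≤ |t j|^2 := by nlinarith
          _ = (t j)^2 := sq_abs _
      nlinarith [cLow_nonneg]
    · have h1 : Real.cos (t j) < 1 := by
        rcases lt_or_eq_of_le (Real.cos_le_one (t j)) with h | h
        · exact h
        · exfalso
          have := (Real.cos_eq_one_iff_of_lt_of_lt
            (by linarith [abs_le.mp (hbd j), Real.pi_pos]) (by linarith [abs_le.mp (hbd j), Real.pi_pos])).mp h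
          exact htj_ne this
      linarith
  have hsum : 1 - Real.cos (t j) ≤ ∑ i, (1 - Real.cos (t i)) :=
    Finset.single_le_sum (fun i _ => hnonneg i) (Finset.mem_univ j)
  rw [lam_eq d hd]
  constructor
  · linarith [hterm.1]
  · linarith [hterm.2]

lemma Qr_ge (l hh : ℝ) (hl : 1 < l) (hhh : 0 ≤ hh) (hlow : 1 + cLow * hh^2 ≤ l) :
    1 + Real.sqrt cLow * hh ≤ Qr l := by
  unfold Qr
  have h1 : (1:ℝ) ≤ Real.sqrt (l+1) := by
    rw [Real.one_le_sqrt]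
    linarith
  have h2 : Real.sqrt cLow * hh ≤ Real.sqrt (l-1) := by
    have : Real.sqrt cLow * hh = Real.sqrt (cLow * hh^2) := by
      rw [Real.sqrt_mul cLow_nonneg, Real.sqrt_sq hhh]
    rw [this]
    exact Real.sqrt_le_sqrt (by linarith)
  have h3 : 0 ≤ Real.sqrt cLow * hh := by positivity
  nlinarith [Real.sqrt_nonneg (l-1), Real.sqrt_nonneg (l+1)]

lemma pow_ge (q a r : ℝ) (N : ℕ) (ha : 0 ≤ a) (hq : 1 + a ≤ q)
    (hNa : r ≤ (N:ℝ) * a) :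
    1 + r ≤ q ^ N := by
  have h1 : 1 + (N:ℝ) * a ≤ (1+a)^N := one_add_mul_le_pow (by linarith) N
  have h2 : (1+a)^N ≤ q^N := pow_le_pow_left₀ (by linarith) hq N
  nlinarith

lemma A_rec (d n : ℕ) (hd : 2 ≤ d) (hn : 1 ≤ n)
    (u : (Fin (d-1) → ℤ) → ℕ → ℂ) (hu : HalfHarmMesh d n u)
    (k : Fin (d-1) → ℤ) (y : ℕ) :
    (∑ x ∈ ILpi (d-1) n, u x (y+2) * Ech (d-1) n k x)
      = 2 * ((((d:ℝ) - ∑ i, Real.cos (π/(n:ℝ) * (k i : ℝ))) : ℝ) : ℂ) *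
          (∑ x ∈ ILpi (d-1) n, u x (y+1) * Ech (d-1) n k x)
        - (∑ x ∈ ILpi (d-1) n, u x y * Ech (d-1) n k x) := by
  set A : ℕ → ℂ := fun y' => ∑ x ∈ ILpi (d-1) n, u x y' * Ech (d-1) n k x with hA
  obtain ⟨hbd, hper, hharm⟩ := hu
  have gper : ∀ y' : ℕ, ∀ i, ∀ x : Fin (d-1) → ℤ,
      (fun x => u x y' * Ech (d-1) n k x) (x + (2*n) • Pi.single i 1)
      = u x y' * Ech (d-1) n k x := by
    intro y' i x
    dsimp only
    rw [hper, Ech_per (d-1) n hn]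
  have c1 : ∀ i, ∑ x ∈ ILpi (d-1) n, u (x + Pi.single i 1) (y+1) * Ech (d-1) n k x
      = ch n (k i) * A (y+1) := by
    intro i
    have hE : ∀ x : Fin (d-1) → ℤ,
        Ech (d-1) n k x = Ech (d-1) n k (x + Pi.single i 1) * ch n (k i) := by
      intro x
      rw [Ech_shift (d-1) n hn, mul_assoc, ← ch_add]
      simp [ch_zero]
    calc ∑ x ∈ ILpi (d-1) n, u (x + Pi.single i 1) (y+1) * Ech (d-1) n k x
        = ∑ x ∈ ILpi (d-1) n,
            (u (x + Pi.single i 1) (y+1) * Ech (d-1) n k (x + Pi.single i 1)) * ch n (k i) := by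
          apply Finset.sum_congr rfl
          intro x _
          rw [hE x]
          ring
      _ = (∑ x ∈ ILpi (d-1) n,
            u (x + Pi.single i 1) (y+1) * Ech (d-1) n k (x + Pi.single i 1)) * ch n (k i) := by
          rw [Finset.sum_mul]
      _ = A (y+1) * ch n (k i) := by
          rw [sum_shift hn (fun x => u x (y+1) * Ech (d-1) n k x) i (gper (y+1) i)]
      _ = ch n (k i) * A (y+1) := by ring
  have c2 : ∀ i, ∑ x ∈ ILpi (d-1) n, u (x - Pi.single i 1) (y+1) * Ech (d-1) n k x
      = ch n (-(k i)) * A (y+1) := by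
    intro i
    have hE : ∀ x : Fin (d-1) → ℤ,
        Ech (d-1) n k x = Ech (d-1) n k (x - Pi.single i 1) * ch n (-(k i)) := by
      intro x
      have h := Ech_shift (d-1) n hn k (x - Pi.single i 1) i
      rw [sub_add_cancel] at h
      exact h
    calc ∑ x ∈ ILpi (d-1) n, u (x - Pi.single i 1) (y+1) * Ech (d-1) n k x
        = ∑ x ∈ ILpi (d-1) n,
            (u (x - Pi.single i 1) (y+1) * Ech (d-1) n k (x - Pi.single i 1)) * ch n (-(k i)) := by
          apply Finset.sum_congr rfl
          intro x _
          rw [hE x]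
          ring
      _ = (∑ x ∈ ILpi (d-1) n,
            u (x - Pi.single i 1) (y+1) * Ech (d-1) n k (x - Pi.single i 1)) * ch n (-(k i)) := by
          rw [Finset.sum_mul]
      _ = A (y+1) * ch n (-(k i)) := by
          rw [sum_shift_neg hn (fun x => u x (y+1) * Ech (d-1) n k x) i (gper (y+1) i)]
      _ = ch n (-(k i)) * A (y+1) := by ring
  have split : ∑ x ∈ ILpi (d-1) n,
      ((∑ i, (u (x + Pi.single i 1) (y+1) + u (x - Pi.single i 1) (y+1)))
        + u x (y+2) + u x y) * Ech (d-1) n k x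
      = (∑ i, (ch n (k i) + ch n (-(k i)))) * A (y+1) + A (y+2) + A y := by
    calc ∑ x ∈ ILpi (d-1) n,
        ((∑ i, (u (x + Pi.single i 1) (y+1) + u (x - Pi.single i 1) (y+1)))
          + u x (y+2) + u x y) * Ech (d-1) n k x
        = ∑ x ∈ ILpi (d-1) n,
            ((∑ i, ((u (x + Pi.single i 1) (y+1) + u (x - Pi.single i 1) (y+1)) * Ech (d-1) n k x))
              + (u x (y+2) * Ech (d-1) n k x + u x y * Ech (d-1) n k x)) := by
          apply Finset.sum_congr rfl
          intro x _
          rw [← Finset.sum_mul]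
          ring
      _ = (∑ x ∈ ILpi (d-1) n,
            ∑ i, ((u (x + Pi.single i 1) (y+1) + u (x - Pi.single i 1) (y+1)) * Ech (d-1) n k x))
          + (A (y+2) + A y) := by
          rw [Finset.sum_add_distrib, Finset.sum_add_distrib]
      _ = (∑ i, ∑ x ∈ ILpi (d-1) n,
            ((u (x + Pi.single i 1) (y+1) + u (x - Pi.single i 1) (y+1)) * Ech (d-1) n k x))
          + (A (y+2) + A y) := by
          rw [Finset.sum_comm]
      _ = (∑ i, (ch n (k i) + ch n (-(k i))) * A (y+1)) + (A (y+2) + A y) := by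
          congr 1
          apply Finset.sum_congr rfl
          intro i _
          rw [Finset.sum_congr rfl (fun x _ => add_mul _ _ _), Finset.sum_add_distrib, c1 i, c2 i]
          ring
      _ = (∑ i, (ch n (k i) + ch n (-(k i)))) * A (y+1) + A (y+2) + A y := by
          rw [Finset.sum_mul]
          ring
  have rhs : ∑ x ∈ ILpi (d-1) n,
      ((∑ i, (u (x + Pi.single i 1) (y+1) + u (x - Pi.single i 1) (y+1)))
        + u x (y+2) + u x y) * Ech (d-1) n k x = 2 * (d:ℂ) * A (y+1) := by
    rw [Finset.sum_congr rfl (fun x _ => by rw [hharm x y])]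
    rw [hA, Finset.mul_sum]
    apply Finset.sum_congr rfl
    intro x _
    ring
  have main : (∑ i, (ch n (k i) + ch n (-(k i)))) * A (y+1) + A (y+2) + A y
      = 2 * (d:ℂ) * A (y+1) := by rw [← split, rhs]
  have hcos : (∑ i, (ch n (k i) + ch n (-(k i))))
      = 2 * ((∑ i, Real.cos (π/(n:ℝ) * (k i : ℝ)) : ℝ) : ℂ) := by
    rw [Finset.sum_congr rfl (fun i _ => ch_cos n (k i))]
    push_cast
    rw [Finset.mul_sum]
  rw [hcos] at main
  have hc : ((((d:ℝ) - ∑ i, Real.cos (π/(n:ℝ) * (k i : ℝ))) : ℝ) : ℂ)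
      = (d:ℂ) - ((∑ i, Real.cos (π/(n:ℝ) * (k i : ℝ)) : ℝ) : ℂ) := by
    push_cast
    ring
  show A (y+2) = _ * A (y+1) - A y
  rw [hc]
  linear_combination main


/-- Decay of the multiplier and `L²_h` contraction: if `N·h ≥ r` and `u` has
mean zero on the bottom layer, then (i) `Q(λ(kh))^{-N} ≤ (1+√c·r)⁻¹` for every
`k ∈ I_{π/h}^{d-1} \ {0}`, and (ii)
`‖u(·,Nh)‖_{L²_h} ≤ (1+√c·r)⁻¹ ‖u(·,0)‖_{L²_h}`. -/
theorem halfspace_mesh_L2_decay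
    (d n : ℕ) (hd : 2 ≤ d) (hn : 1 ≤ n)
    (u : (Fin (d-1) → ℤ) → ℕ → ℂ) (hu : HalfHarmMesh d n u)
    (r : ℝ) (hr : 0 ≤ r) (N : ℕ) (hN : 1 ≤ N)
    (hNh : r ≤ (N:ℝ) * (π / (n:ℝ)))
    (hmean : (∑ x ∈ ILpi (d-1) n, u x 0) = 0) :
    (∀ k ∈ ILpi (d-1) n, k ≠ 0 →
        (Qr (lam d (fun i => π / (n:ℝ) * (k i : ℝ)))) ^ (-(N:ℤ))
          ≤ (1 + Real.sqrt cLow * r)⁻¹) ∧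
    ((π / (n:ℝ)) ^ (d-1) * ∑ x ∈ ILpi (d-1) n, ‖u x N‖ ^ 2)
        ^ ((1:ℝ)/2)
      ≤ (1 + Real.sqrt cLow * r)⁻¹ *
        ((π / (n:ℝ)) ^ (d-1) * ∑ x ∈ ILpi (d-1) n, ‖u x 0‖ ^ 2)
          ^ ((1:ℝ)/2) := by
  have hnpos : (0:ℝ) < n := by exact_mod_cast (by omega : 0 < n)
  have hh : (0:ℝ) < π/(n:ℝ) := div_pos Real.pi_pos hnpos
  set θ : ℝ := (1 + Real.sqrt cLow * r)⁻¹ with hθdef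
  have hsc : 0 ≤ Real.sqrt cLow * r := mul_nonneg (Real.sqrt_nonneg _) hr
  have hθpos : 0 < 1 + Real.sqrt cLow * r := by linarith
  have hθ0 : 0 ≤ θ := by positivity
  -- the key multiplier bound
  have keybound : ∀ k ∈ ILpi (d-1) n, k ≠ 0 →
      1 < lam d (fun i => π/(n:ℝ) * (k i : ℝ)) ∧
      1 + Real.sqrt cLow * r ≤ (Qr (lam d (fun i => π/(n:ℝ) * (k i : ℝ))))^N := by
    intro k hk hk0
    obtain ⟨hlow, hgt⟩ := lam_lower d n hd hn k hk hk0
    refine ⟨hgt, ?_⟩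
    apply pow_ge _ (Real.sqrt cLow * (π/(n:ℝ))) _ N
      (mul_nonneg (Real.sqrt_nonneg _) hh.le)
      (Qr_ge _ (π/(n:ℝ)) hgt hh.le hlow)
    calc Real.sqrt cLow * r ≤ Real.sqrt cLow * ((N:ℝ) * (π/(n:ℝ))) :=
          mul_le_mul_of_nonneg_left hNh (Real.sqrt_nonneg _)
      _ = (N:ℝ) * (Real.sqrt cLow * (π/(n:ℝ))) := by ring
  have part1 : ∀ k ∈ ILpi (d-1) n, k ≠ 0 →
      (Qr (lam d (fun i => π / (n:ℝ) * (k i : ℝ)))) ^ (-(N:ℤ))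
        ≤ (1 + Real.sqrt cLow * r)⁻¹ := by
    intro k hk hk0
    obtain ⟨hgt, hQN⟩ := keybound k hk hk0
    have hq1 : 1 < Qr (lam d (fun i => π/(n:ℝ) * (k i : ℝ))) := Qr_gt_one hgt
    rw [zpow_neg, zpow_natCast]
    exact inv_anti₀ hθpos hQN
  refine ⟨part1, ?_⟩
  -- Part (ii)
  obtain ⟨B, hB⟩ := hu.1
  set A : (Fin (d-1) → ℤ) → ℕ → ℂ :=
    fun k y => ∑ x ∈ ILpi (d-1) n, u x y * Ech (d-1) n k x with hA
  have hAbd : ∀ k y, ‖A k y‖ ≤ ((ILpi (d-1) n).card : ℝ) * B := by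
    intro k y
    calc ‖A k y‖ ≤ ∑ x ∈ ILpi (d-1) n, ‖u x y * Ech (d-1) n k x‖ :=
          norm_sum_le _ _
      _ = ∑ x ∈ ILpi (d-1) n, ‖u x y‖ := by
          apply Finset.sum_congr rfl
          intro x _
          rw [norm_mul, Ech_abs, mul_one]
      _ ≤ ∑ x ∈ ILpi (d-1) n, B := Finset.sum_le_sum (fun x _ => hB x y)
      _ = ((ILpi (d-1) n).card : ℝ) * B := by rw [Finset.sum_const, nsmul_eq_mul]
  have hArec : ∀ k y, A k (y+2)
      = 2 * ((lam d (fun i => π/(n:ℝ) * (k i : ℝ)) : ℝ) : ℂ) * A k (y+1) - A k y := by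
    intro k y
    exact A_rec d n hd hn u hu k y
  -- zero mode vanishes
  have hA0 : ∀ y, A 0 y = 0 := by
    have hlam0 : lam d (fun i => π/(n:ℝ) * (((0 : Fin (d-1) → ℤ)) i : ℝ)) = 1 := by
      unfold lam
      simp only [Pi.zero_apply, Int.cast_zero, mul_zero, Real.cos_zero]
      rw [Finset.sum_const, Finset.card_univ, Fintype.card_fin, nsmul_eq_mul, mul_one]
      have : ((d-1 : ℕ) : ℝ) = (d:ℝ) - 1 := by
        have h1 : 1 ≤ d := by omega
        push_cast [Nat.cast_sub h1]
        ring
      rw [this]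
      ring
    apply solve_lin (fun y => A 0 y) (((ILpi (d-1) n).card : ℝ) * B) (fun y => hAbd 0 y)
    · intro y
      have := hArec 0 y
      rw [hlam0] at this
      simpa using this
    · show (∑ x ∈ ILpi (d-1) n, u x 0 * Ech (d-1) n (0 : Fin (d-1) → ℤ) x) = 0
      have : ∀ x ∈ ILpi (d-1) n, u x 0 * Ech (d-1) n 0 x = u x 0 := by
        intro x _
        have : Ech (d-1) n 0 x = 1 := by
          unfold Ech
          simp [ch_zero]
        rw [this, mul_one]
      rw [Finset.sum_congr rfl this]
      exact hmean
  -- nonzero modes decay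
  have hdecay : ∀ k ∈ ILpi (d-1) n,
      Complex.normSq (A k N) ≤ θ^2 * Complex.normSq (A k 0) := by
    intro k hk
    by_cases hk0 : k = 0
    · subst hk0
      rw [hA0 N]
      simp only [map_zero]
      exact mul_nonneg (sq_nonneg θ) (Complex.normSq_nonneg _)
    · obtain ⟨hgt, hQN⟩ := keybound k hk hk0
      set l : ℝ := lam d (fun i => π/(n:ℝ) * (k i : ℝ)) with hl
      have hq1 : 1 < Qr l := Qr_gt_one hgt
      have hsol := solve_rec hgt (fun y => A k y) (((ILpi (d-1) n).card : ℝ) * B)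
        (fun y => hAbd k y) (fun y => hArec k y) N
      have habs : ‖A k N‖ = ‖A k 0‖ * ((Qr l)⁻¹)^N := by
        rw [hsol]
        rw [norm_mul, norm_pow, norm_inv, Complex.norm_of_nonneg (by linarith)]
      have hinv : ((Qr l)⁻¹)^N ≤ θ := by
        rw [hθdef, inv_pow]
        have hQpow : 0 < (Qr l)^N := pow_pos (by linarith) N
        rw [inv_le_inv₀ hQpow hθpos]
        exact hQN
      have h0 : 0 ≤ ‖A k 0‖ := norm_nonneg _
      have h1 : 0 ≤ ((Qr l)⁻¹)^N := by positivity
      rw [Complex.normSq_eq_norm_sq, Complex.normSq_eq_norm_sq, habs]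
      have h2 : (Qr l)⁻¹^N * ((Qr l)⁻¹)^N ≤ θ * θ := mul_le_mul hinv hinv h1 hθ0
      calc (‖A k 0‖ * (Qr l)⁻¹ ^ N)^2
          = ‖A k 0‖^2 * ((Qr l)⁻¹^N * ((Qr l)⁻¹)^N) := by ring
        _ ≤ ‖A k 0‖^2 * (θ * θ) :=
            mul_le_mul_of_nonneg_left h2 (by positivity)
        _ = θ^2 * ‖A k 0‖^2 := by ring
  -- Parseval at levels N and 0
  have P : ∀ y : ℕ, ∑ k ∈ ILpi (d-1) n, Complex.normSq (A k y)
      = ((2*n : ℕ) : ℝ)^(d-1) * ∑ x ∈ ILpi (d-1) n, Complex.normSq (u x y) := by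
    intro y
    have hpar := parseval (d-1) n hn (fun x => u x y)
    simp only [Complex.mul_conj] at hpar
    exact_mod_cast hpar
  have hKpos : (0:ℝ) < ((2*n : ℕ) : ℝ)^(d-1) := by
    have : (0:ℝ) < ((2*n : ℕ) : ℝ) := by exact_mod_cast (by omega : 0 < 2*n)
    positivity
  have hS : ∑ x ∈ ILpi (d-1) n, Complex.normSq (u x N)
      ≤ θ^2 * ∑ x ∈ ILpi (d-1) n, Complex.normSq (u x 0) := by
    have h1 : ∑ k ∈ ILpi (d-1) n, Complex.normSq (A k N)
        ≤ θ^2 * ∑ k ∈ ILpi (d-1) n, Complex.normSq (A k 0) := by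
      rw [Finset.mul_sum]
      exact Finset.sum_le_sum hdecay
    rw [P N, P 0] at h1
    rw [← mul_le_mul_iff_of_pos_left hKpos]
    exact h1.trans_eq (by ring)
  -- conclude
  simp only [Complex.sq_norm]
  have hhm : (0:ℝ) ≤ (π/(n:ℝ))^(d-1) := by positivity
  have hS0 : (0:ℝ) ≤ ∑ x ∈ ILpi (d-1) n, Complex.normSq (u x 0) :=
    Finset.sum_nonneg (fun x _ => Complex.normSq_nonneg _)
  have hkey : (π/(n:ℝ))^(d-1) * ∑ x ∈ ILpi (d-1) n, Complex.normSq (u x N)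
      ≤ θ^2 * ((π/(n:ℝ))^(d-1) * ∑ x ∈ ILpi (d-1) n, Complex.normSq (u x 0)) := by
    have := mul_le_mul_of_nonneg_left hS hhm
    calc (π/(n:ℝ))^(d-1) * ∑ x ∈ ILpi (d-1) n, Complex.normSq (u x N)
        ≤ (π/(n:ℝ))^(d-1) * (θ^2 * ∑ x ∈ ILpi (d-1) n, Complex.normSq (u x 0)) := this
      _ = θ^2 * ((π/(n:ℝ))^(d-1) * ∑ x ∈ ILpi (d-1) n, Complex.normSq (u x 0)) := by ring
  rw [← Real.sqrt_eq_rpow, ← Real.sqrt_eq_rpow]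
  calc Real.sqrt ((π/(n:ℝ))^(d-1) * ∑ x ∈ ILpi (d-1) n, Complex.normSq (u x N))
      ≤ Real.sqrt (θ^2 * ((π/(n:ℝ))^(d-1) * ∑ x ∈ ILpi (d-1) n, Complex.normSq (u x 0))) :=
        Real.sqrt_le_sqrt hkey
    _ = θ * Real.sqrt ((π/(n:ℝ))^(d-1) * ∑ x ∈ ILpi (d-1) n, Complex.normSq (u x 0)) := by
        rw [Real.sqrt_mul (sq_nonneg θ), Real.sqrt_sq hθ0]
end
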